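/- arXiv:1310.5642 — 3 statements merged into one kernel-verified Lean document; each statement's English description precedes it below -/
import Mathlib

section
/- Let E be a real normed vector space, p a seminorm on E, K ≥ 0, and B : E × E → E an ℝ-bilinear map such that ‖B(v,w)‖ ≤ K ‖v‖ p(w) for all v, w ∈ E. Let N ∈ ℕ and u_0, …, u_N ∈ E satisfy the recursion u_{j+1} = (1/(j+1)) Σ_{ℓ=0}^{j} B(u_ℓ, u_{j−ℓ}) for j = 0, …, N−1, and set u^N(t) = Σ_{j=0}^N u_j t^j. Then for every t ≥ 0, ‖(d u^N/dt)(t) − B(u^N(t), u^N(t))‖ ≤ ε(t), where ε(t) := K Σ_{j=N}^{2N} [ Σ_{ℓ=j−N}^{N} ‖u_ℓ‖ p(u_{j−ℓ}) ] t^j. -/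
lemma pde_reindex_aux (E : Type*) [AddCommMonoid E] (N : ℕ) (f : ℕ → ℕ → E) :
    ∑ x ∈ (Finset.range (N+1)) ×ˢ (Finset.range (N+1)), f (x.1 + x.2) x.1
      = ∑ x ∈ (Finset.range (2*N+1)).sigma
          (fun m => Finset.Icc (m - N) (min m N)), f x.1 x.2 := by
  apply Finset.sum_nbij' (i := fun x => ⟨x.1 + x.2, x.1⟩)
    (j := fun x => (x.2, x.1 - x.2))
  · intro a ha
    simp only [Finset.mem_product, Finset.mem_range] at ha
    simp only [Finset.mem_sigma, Finset.mem_range, Finset.mem_Icc, le_min_iff]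
    omega
  · intro a ha
    simp only [Finset.mem_sigma, Finset.mem_range, Finset.mem_Icc, le_min_iff] at ha
    simp only [Finset.mem_product, Finset.mem_range]
    omega
  · intro a ha
    simp
  · intro a ha
    obtain ⟨m, ℓ⟩ := a
    simp only [Finset.mem_sigma, Finset.mem_range, Finset.mem_Icc, le_min_iff] at ha
    have h : ℓ + (m - ℓ) = m := by omega
    simp [h]
  · intro a ha
    simp

/-- If `‖B(v,w)‖ ≤ K ‖v‖ p(w)` and the coefficients of
`u^N(t) = ∑_{j=0}^N u_j t^j` satisfy the Taylor recursion, then for all `t ≥ 0` the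
differential error is bounded by
`ε(t) = K ∑_{j=N}^{2N} [∑_{ℓ=j−N}^{N} ‖u_ℓ‖ p(u_{j−ℓ})] t^j`. -/
theorem polynomial_differential_error_estimate
    (E : Type*) [NormedAddCommGroup E] [NormedSpace ℝ E]
    (p : Seminorm ℝ E) (K : ℝ) (hK : 0 ≤ K)
    (B : E →ₗ[ℝ] E →ₗ[ℝ] E)
    (hB : ∀ v w : E, ‖B v w‖ ≤ K * ‖v‖ * p w)
    (N : ℕ) (u : ℕ → E)
    (hrec : ∀ j < N,
      u (j + 1) = ((j : ℝ) + 1)⁻¹ • ∑ ℓ ∈ Finset.range (j + 1), B (u ℓ) (u (j - ℓ)))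
    (uN : ℝ → E) (huN : ∀ t : ℝ, uN t = ∑ j ∈ Finset.range (N + 1), t ^ j • u j) :
    ∀ t : ℝ, 0 ≤ t →
      ‖deriv uN t - B (uN t) (uN t)‖ ≤
        K * ∑ j ∈ Finset.Icc N (2 * N),
          (∑ ℓ ∈ Finset.Icc (j - N) N, ‖u ℓ‖ * p (u (j - ℓ))) * t ^ j := by
  intro t ht
  have hfun : uN = fun s : ℝ => ∑ j ∈ Finset.range (N + 1), s ^ j • u j := funext huN
  subst hfun
  have hd : HasDerivAt (fun s : ℝ => ∑ j ∈ Finset.range (N + 1), s ^ j • u j)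
      (∑ j ∈ Finset.range (N + 1), ((j : ℝ) * t ^ (j - 1)) • u j) t :=
    HasDerivAt.fun_sum fun j _ => (hasDerivAt_pow j t).smul_const (u j)
  rw [hd.deriv]
  rw [huN t]
  -- rewrite derivative as a double sum
  have hderiv_eq :
      ∑ j ∈ Finset.range (N + 1), ((j : ℝ) * t ^ (j - 1)) • u j
        = ∑ m ∈ Finset.range N, ∑ ℓ ∈ Finset.range (m + 1),
            t ^ m • (B (u ℓ) (u (m - ℓ))) := by
    rw [Finset.sum_range_succ']
    simp only [Nat.cast_zero, zero_mul, zero_smul, add_zero]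
    refine Finset.sum_congr rfl fun j hj => ?_
    rw [Finset.mem_range] at hj
    rw [hrec j hj, smul_smul, ← Finset.smul_sum]
    congr 1
    have hj0 : ((j : ℝ) + 1) ≠ 0 := by positivity
    push_cast [Nat.add_sub_cancel]
    field_simp
  -- expand the bilinear term over the product
  have hB_eq :
      B (∑ j ∈ Finset.range (N + 1), t ^ j • u j)
        (∑ j ∈ Finset.range (N + 1), t ^ j • u j)
        = ∑ x ∈ (Finset.range (N+1)) ×ˢ (Finset.range (N+1)),
            t ^ (x.1 + x.2) • B (u x.1) (u x.2) := by
    rw [Finset.sum_product]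
    simp only [map_sum, LinearMap.sum_apply, map_smul, LinearMap.smul_apply,
      Finset.smul_sum, smul_smul, pow_add]
    rw [Finset.sum_comm]
    simp [mul_comm]
  have hre := pde_reindex_aux E N (fun m ℓ => t ^ m • B (u ℓ) (u (m - ℓ)))
  simp only [Nat.add_sub_cancel_left] at hre
  rw [hB_eq, hre, Finset.sum_sigma]
  -- split the outer sum at N
  have hsplit :
      ∑ m ∈ Finset.range (2*N+1),
          ∑ ℓ ∈ Finset.Icc (m - N) (min m N), t ^ m • B (u ℓ) (u (m - ℓ))
        = (∑ m ∈ Finset.range N,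
            ∑ ℓ ∈ Finset.range (m + 1), t ^ m • B (u ℓ) (u (m - ℓ)))
          + ∑ m ∈ Finset.Icc N (2*N),
              ∑ ℓ ∈ Finset.Icc (m - N) N, t ^ m • B (u ℓ) (u (m - ℓ)) := by
    rw [Finset.range_eq_Ico,
      ← Finset.sum_Ico_consecutive _ (Nat.zero_le N) (by omega : N ≤ 2*N+1)]
    congr 1
    · rw [← Finset.range_eq_Ico]
      refine Finset.sum_congr rfl fun m hm => ?_
      rw [Finset.mem_range] at hm
      have : Finset.Icc (m - N) (min m N) = Finset.range (m + 1) := by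
        ext x; simp only [Finset.mem_Icc, Finset.mem_range, le_min_iff]; omega
      rw [this]
    · rw [Finset.Ico_add_one_right_eq_Icc]
      refine Finset.sum_congr rfl fun m hm => ?_
      rw [Finset.mem_Icc] at hm
      have : min m N = N := min_eq_right hm.1
      rw [this]
  rw [hsplit, hderiv_eq]
  rw [sub_add_eq_sub_sub, sub_self, zero_sub, norm_neg]
  -- estimate
  rw [Finset.mul_sum]
  refine le_trans (norm_sum_le _ _) (Finset.sum_le_sum fun m hm => ?_)
  rw [Finset.sum_mul, Finset.mul_sum]
  refine le_trans (norm_sum_le _ _) (Finset.sum_le_sum fun ℓ _ => ?_)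
  rw [norm_smul, Real.norm_eq_abs, abs_pow, abs_of_nonneg ht]
  calc t ^ m * ‖B (u ℓ) (u (m - ℓ))‖
      ≤ t ^ m * (K * ‖u ℓ‖ * p (u (m - ℓ))) :=
        mul_le_mul_of_nonneg_left (hB _ _) (pow_nonneg ht m)
    _ = K * (‖u ℓ‖ * p (u (m - ℓ)) * t ^ m) := by ring
end

section
/- Let H be a real inner product space, p a seminorm on H, K, G ≥ 0, and B : H × H → H an ℝ-bilinear map such that ‖B(v,w)‖ ≤ K ‖v‖ p(w) and |⟨B(v,w), w⟩| ≤ G ‖v‖ ‖w‖² for all v, w ∈ H. Let T ∈ (0, +∞] and let u, uₐ : [0,T) → H be differentiable curves and f, e : [0,T) → H functions such that u'(t) = B(u(t), u(t)) + f(t) and uₐ'(t) = B(uₐ(t), uₐ(t)) + f(t) + e(t) for all t ∈ [0,T). Then for every t ∈ [0,T), the right upper Dini derivative of the function t ↦ ‖u(t) − uₐ(t)‖ satisfies d⁺‖u − uₐ‖(t) ≤ (G ‖uₐ(t)‖ + K p(uₐ(t))) ‖u(t) − uₐ(t)‖ + G ‖u(t) − uₐ(t)‖² + ‖e(t)‖.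 -/
/-- The right upper Dini derivative `d⁺g(t) = limsup_{h→0⁺} (g(t+h) − g(t))/h`,
with values in the extended reals. -/
noncomputable def diniDerivPlus (g : ℝ → ℝ) (t : ℝ) : EReal :=
  Filter.limsup (fun h : ℝ => (((g (t + h) - g t) / h : ℝ) : EReal))
    (nhdsWithin 0 (Set.Ioi 0))

/-- if `B` satisfies the basic inequality `‖B(v,w)‖ ≤ K ‖v‖ p(w)` and the
Kato inequality `|⟨B(v,w), w⟩| ≤ G ‖v‖ ‖w‖²`, `u` solves `u' = B(u,u) + f` and `uₐ`
solves `uₐ' = B(uₐ,uₐ) + f + e` on `[0,T)`, then the right upper Dini derivative of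
`t ↦ ‖u(t) − uₐ(t)‖` satisfies the stated differential inequality. -/
theorem dini_derivative_of_error_norm
    (H : Type*) [NormedAddCommGroup H] [InnerProductSpace ℝ H]
    (p : Seminorm ℝ H) (K G : ℝ) (hK : 0 ≤ K) (hG : 0 ≤ G)
    (B : H →ₗ[ℝ] H →ₗ[ℝ] H)
    (hB1 : ∀ v w : H, ‖B v w‖ ≤ K * ‖v‖ * p w)
    (hB2 : ∀ v w : H, |(inner ℝ (B v w) w : ℝ)| ≤ G * ‖v‖ * ‖w‖ ^ 2)
    (T : EReal) (hT : 0 < T)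
    (D : Set ℝ) (hD : D = {t : ℝ | 0 ≤ t ∧ (t : EReal) < T})
    (u ua f e : ℝ → H)
    (hu : ∀ t ∈ D, HasDerivWithinAt u (B (u t) (u t) + f t) D t)
    (hua : ∀ t ∈ D, HasDerivWithinAt ua (B (ua t) (ua t) + f t + e t) D t) :
    ∀ t ∈ D,
      diniDerivPlus (fun s => ‖u s - ua s‖) t ≤
        (((G * ‖ua t‖ + K * p (ua t)) * ‖u t - ua t‖
            + G * ‖u t - ua t‖ ^ 2 + ‖e t‖ : ℝ) : EReal) := by
  intro t ht
  set w : ℝ → H := fun s => u s - ua s with hw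
  set w' : H := (B (u t) (u t) + f t) - (B (ua t) (ua t) + f t + e t) with hw'
  have hwderiv : HasDerivWithinAt w w' D t := (hu t ht).sub (hua t ht)
  set R : ℝ := (G * ‖ua t‖ + K * p (ua t)) * ‖w t‖ + G * ‖w t‖ ^ 2 + ‖e t‖ with hR
  -- eventually t + h ∈ D for small positive h
  have hev : ∀ᶠ h in nhdsWithin (0:ℝ) (Set.Ioi 0), t + h ∈ D := by
    have htD : 0 ≤ t ∧ (t : EReal) < T := by rw [hD] at ht; exact ht
    induction T with
    | bot => exact absurd hT (by simp)
    | coe r =>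
      have htr : t < r := by exact_mod_cast htD.2
      filter_upwards [Ioo_mem_nhdsGT (by linarith : (0:ℝ) < r - t)] with h hh
      rw [hD]
      refine ⟨by linarith [htD.1, hh.1], ?_⟩
      exact_mod_cast (by linarith [hh.2] : t + h < r)
    | top =>
      filter_upwards [self_mem_nhdsWithin] with h hh
      rw [hD]
      exact ⟨by linarith [htD.1, Set.mem_Ioi.mp hh], EReal.coe_lt_top _⟩
  -- the map h ↦ t + h sends 𝓝[>] 0 into 𝓝[D \ {t}] t
  have hmap : Filter.Tendsto (fun h : ℝ => t + h) (nhdsWithin 0 (Set.Ioi 0))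
      (nhdsWithin t (D \ {t})) := by
    rw [tendsto_nhdsWithin_iff]
    constructor
    · have h0 : Filter.Tendsto (fun h : ℝ => t + h) (nhds 0) (nhds t) := by
        have := ((continuous_const (y := t)).add continuous_id).tendsto (0:ℝ)
        simpa [Pi.add_def] using this
      exact h0.mono_left nhdsWithin_le_nhds
    · filter_upwards [hev, self_mem_nhdsWithin] with h hh hpos
      exact ⟨hh, by simp [ne_of_gt (Set.mem_Ioi.mp hpos)]⟩
  -- key algebraic identity
  have hBsplit : B (u t) (u t) - B (ua t) (ua t)
      = B (w t) (w t) + B (w t) (ua t) + B (ua t) (w t) := by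
    simp only [hw, map_sub, map_add, LinearMap.sub_apply, LinearMap.add_apply]
    abel
  have hw'eq : w' = B (w t) (w t) + B (w t) (ua t) + B (ua t) (w t) - e t := by
    rw [hw', ← hBsplit]; abel
  -- key inner product bound
  have hkey : (inner ℝ w' (w t) : ℝ) ≤ R * ‖w t‖ := by
    rw [hw'eq]
    have h1 : (inner ℝ (B (w t) (w t)) (w t) : ℝ) ≤ G * ‖w t‖ * ‖w t‖ ^ 2 :=
      le_trans (le_abs_self _) (hB2 _ _)
    have h3 : (inner ℝ (B (ua t) (w t)) (w t) : ℝ) ≤ G * ‖ua t‖ * ‖w t‖ ^ 2 :=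
      le_trans (le_abs_self _) (hB2 _ _)
    have h2 : (inner ℝ (B (w t) (ua t)) (w t) : ℝ) ≤ (K * ‖w t‖ * p (ua t)) * ‖w t‖ := by
      refine le_trans (real_inner_le_norm _ _) ?_
      exact mul_le_mul_of_nonneg_right (hB1 _ _) (norm_nonneg _)
    have h4 : (inner ℝ (-(e t)) (w t) : ℝ) ≤ ‖e t‖ * ‖w t‖ := by
      refine le_trans (real_inner_le_norm _ _) ?_
      simp
    have hexp : (inner ℝ (B (w t) (w t) + B (w t) (ua t) + B (ua t) (w t) - e t) (w t) : ℝ)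
        = inner ℝ (B (w t) (w t)) (w t) + inner ℝ (B (w t) (ua t)) (w t)
          + inner ℝ (B (ua t) (w t)) (w t) + (inner ℝ (-(e t)) (w t) : ℝ) := by
      rw [sub_eq_add_neg]
      simp [inner_add_left]
    rw [hexp, hR]
    nlinarith [norm_nonneg (w t), sq_nonneg (‖w t‖)]
  -- produce the limit of the difference quotient
  obtain ⟨L, hq, hL⟩ : ∃ L : ℝ,
      Filter.Tendsto (fun h : ℝ => (‖w (t + h)‖ - ‖w t‖) / h)
        (nhdsWithin 0 (Set.Ioi 0)) (nhds L) ∧ L ≤ R := by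
    by_cases hz : w t = 0
    · -- zero case: the quotient tends to ‖w'‖ = ‖e t‖
      refine ⟨‖w'‖, ?_, ?_⟩
      · have hslope : Filter.Tendsto (fun h : ℝ => slope w t (t + h))
            (nhdsWithin 0 (Set.Ioi 0)) (nhds w') :=
          (hasDerivWithinAt_iff_tendsto_slope.mp hwderiv).comp hmap
        have := hslope.norm
        refine this.congr' ?_
        filter_upwards [self_mem_nhdsWithin] with h hh
        have hpos : (0:ℝ) < h := hh
        simp only [Function.comp, slope_def_field, hz]
        rw [slope, hz]
        simp only [vsub_eq_sub, sub_zero, add_sub_cancel_left, norm_smul,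
          norm_inv, Real.norm_eq_abs, abs_of_pos hpos, norm_zero]
        rw [div_eq_inv_mul]
      · have hweq : w' = -(e t) := by
          have huua : u t = ua t := sub_eq_zero.mp hz
          rw [hw', huua]; abel
        rw [hweq, hR, hz]
        simp
    · -- nonzero case: ‖w ·‖ is differentiable
      have hwt : ‖w t‖ ≠ 0 := norm_ne_zero_iff.mpr hz
      have h1 : HasDerivWithinAt (fun s => ‖w s‖ ^ 2) (2 * inner ℝ (w t) w') D t :=
        hwderiv.norm_sq
      have h2 : HasDerivWithinAt (fun s => Real.sqrt (‖w s‖ ^ 2))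
          ((2 * inner ℝ (w t) w') / (2 * Real.sqrt (‖w t‖ ^ 2))) D t :=
        h1.sqrt (pow_ne_zero 2 hwt)
      have hfun : (fun s => Real.sqrt (‖w s‖ ^ 2)) = fun s => ‖w s‖ := by
        funext s; exact Real.sqrt_sq (norm_nonneg _)
      rw [hfun, Real.sqrt_sq (norm_nonneg _)] at h2
      refine ⟨(2 * inner ℝ (w t) w') / (2 * ‖w t‖), ?_, ?_⟩
      · have hslope : Filter.Tendsto (fun h : ℝ => slope (fun s => ‖w s‖) t (t + h))
            (nhdsWithin 0 (Set.Ioi 0))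
            (nhds ((2 * inner ℝ (w t) w') / (2 * ‖w t‖))) :=
          (hasDerivWithinAt_iff_tendsto_slope.mp h2).comp hmap
        refine hslope.congr' ?_
        filter_upwards [self_mem_nhdsWithin] with h hh
        have hne : h ≠ 0 := ne_of_gt (Set.mem_Ioi.mp hh)
        rw [slope_def_field]
        field_simp
        rw [add_sub_cancel_left, mul_div_cancel_left₀ _ hne]
      · have hpos : (0:ℝ) < ‖w t‖ := (norm_nonneg _).lt_of_ne' hwt
        rw [div_le_iff₀ (by positivity)]
        have : (inner ℝ (w t) w' : ℝ) = inner ℝ w' (w t) := real_inner_comm _ _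
        nlinarith [hkey]
  -- conclude via the limsup
  have hcoe : Filter.Tendsto (fun h : ℝ => (((‖w (t + h)‖ - ‖w t‖) / h : ℝ) : EReal))
      (nhdsWithin 0 (Set.Ioi 0)) (nhds (L : EReal)) :=
    (continuous_coe_real_ereal.tendsto L).comp hq
  have hlim : diniDerivPlus (fun s => ‖u s - ua s‖) t = (L : EReal) := by
    unfold diniDerivPlus
    exact hcoe.limsup_eq
  rw [hlim]
  exact_mod_cast hL
end

section
/- Let H be a real inner product space, p a seminorm on H, K, G ≥ 0, and B : H × H → H an ℝ-bilinear map such that ‖B(v,w)‖ ≤ K ‖v‖ p(w) and |⟨B(v,w), w⟩| ≤ G ‖v‖ ‖w‖² for all v, w ∈ H. Let T ∈ (0, +∞], 0 < T_c ≤ T, let u, uₐ : [0,T) → H be differentiable curves and f, e : [0,T) → H such that u'(t) = B(u(t), u(t)) + f(t) and uₐ'(t) = B(uₐ(t), uₐ(t)) + f(t) + e(t) for all t ∈ [0,T). Suppose 𝒟, 𝒟₊ , ε : [0,T) → [0,∞) are continuous with ‖uₐ(t)‖ ≤ 𝒟(t), p(uₐ(t)) ≤ 𝒟₊(t) and ‖e(t)‖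 ≤ ε(t) for all t, and that R : [0,T_c) → [0,∞) is continuous and satisfies the control inequalities d⁺R(t) ≥ (G 𝒟(t) + K 𝒟₊(t)) R(t) + G R(t)² + ε(t) for all t ∈ [0,T_c) and R(0) ≥ ‖u(0) − uₐ(0)‖, where d⁺ is the right upper Dini derivative. Then ‖u(t) − uₐ(t)‖ ≤ R(t) for all t ∈ [0,T_c). -/
set_option maxHeartbeats 1000000 in
/-- a-posteriori error bound, inviscid case: with `B` satisfying the basic
and Kato inequalities, `u` an exact solution and `uₐ` an approximate solution with error
`e` on `[0,T)`, growth estimators `𝒟, 𝒟₊` and error estimator `ε`, any continuous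
nonnegative `R` on `[0,T_c)` (`0 < T_c ≤ T`) satisfying the control inequalities bounds
the error: `‖u(t) − uₐ(t)‖ ≤ R(t)` on `[0,T_c)`. -/
theorem aposteriori_error_bound
    (H : Type*) [NormedAddCommGroup H] [InnerProductSpace ℝ H]
    (p : Seminorm ℝ H) (K G : ℝ) (hK : 0 ≤ K) (hG : 0 ≤ G)
    (B : H →ₗ[ℝ] H →ₗ[ℝ] H)
    (hB1 : ∀ v w : H, ‖B v w‖ ≤ K * ‖v‖ * p w)
    (hB2 : ∀ v w : H, |(inner ℝ (B v w) w : ℝ)| ≤ G * ‖v‖ * ‖w‖ ^ 2)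
    (T Tc : EReal) (hT : 0 < Tc) (hTc : Tc ≤ T)
    (D : Set ℝ) (hD : D = {t : ℝ | 0 ≤ t ∧ (t : EReal) < T})
    (Dc : Set ℝ) (hDc : Dc = {t : ℝ | 0 ≤ t ∧ (t : EReal) < Tc})
    (u ua f e : ℝ → H)
    (hu : ∀ t ∈ D, HasDerivWithinAt u (B (u t) (u t) + f t) D t)
    (hua : ∀ t ∈ D, HasDerivWithinAt ua (B (ua t) (ua t) + f t + e t) D t)
    (𝒟 𝒟p ε : ℝ → ℝ)
    (h𝒟c : ContinuousOn 𝒟 D) (h𝒟pc : ContinuousOn 𝒟p D) (hεc : ContinuousOn ε D)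
    (h𝒟0 : ∀ t ∈ D, 0 ≤ 𝒟 t) (h𝒟p0 : ∀ t ∈ D, 0 ≤ 𝒟p t) (hε0 : ∀ t ∈ D, 0 ≤ ε t)
    (h𝒟 : ∀ t ∈ D, ‖ua t‖ ≤ 𝒟 t) (h𝒟p : ∀ t ∈ D, p (ua t) ≤ 𝒟p t)
    (he : ∀ t ∈ D, ‖e t‖ ≤ ε t)
    (R : ℝ → ℝ) (hRc : ContinuousOn R Dc) (hRnn : ∀ t ∈ Dc, 0 ≤ R t)
    (hRd : ∀ t ∈ Dc,
      (((G * 𝒟 t + K * 𝒟p t) * R t + G * R t ^ 2 + ε t : ℝ) : EReal) ≤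
        diniDerivPlus R t)
    (hR0 : ‖u 0 - ua 0‖ ≤ R 0) :
    ∀ t ∈ Dc, ‖u t - ua t‖ ≤ R t := by
  intro t₁ ht₁
  have hDcD : Dc ⊆ D := by
    rw [hD, hDc]; intro t ht; exact ⟨ht.1, lt_of_lt_of_le ht.2 hTc⟩
  have hmemDc : ∀ s t : ℝ, 0 ≤ s → s ≤ t → t ∈ Dc → s ∈ Dc := by
    rw [hDc]; intro s t hs hst ht
    exact ⟨hs, lt_of_le_of_lt (EReal.coe_le_coe_iff.2 hst) ht.2⟩
  have ht₁0 : 0 ≤ t₁ := by rw [hDc] at ht₁; exact ht₁.1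
  have hIccDc : Set.Icc 0 t₁ ⊆ Dc := fun s hs => hmemDc s t₁ hs.1 hs.2 ht₁
  have hIccD : Set.Icc 0 t₁ ⊆ D := fun s hs => hDcD (hIccDc hs)
  set d : ℝ → H := fun t => u t - ua t with hd_def
  set φ : ℝ → ℝ := fun t => ‖d t‖ with hφ_def
  -- continuity
  have hcu : ContinuousOn u D := fun t ht => (hu t ht).continuousWithinAt
  have hcua : ContinuousOn ua D := fun t ht => (hua t ht).continuousWithinAt
  have hcφ : ContinuousOn φ (Set.Icc 0 t₁) :=
    ((hcu.mono hIccD).sub (hcua.mono hIccD)).norm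
  -- bound constant
  obtain ⟨C, hC⟩ : ∃ C, ∀ s ∈ Set.Icc 0 t₁,
      (G * 𝒟 s + K * 𝒟p s) + 2 * G * R s ≤ C := by
    have hcont : ContinuousOn (fun s => (G * 𝒟 s + K * 𝒟p s) + 2 * G * R s)
        (Set.Icc 0 t₁) :=
      (((continuousOn_const.mul (h𝒟c.mono hIccD)).add
        (continuousOn_const.mul (h𝒟pc.mono hIccD))).add
        (continuousOn_const.mul (hRc.mono hIccDc)))
    obtain ⟨C, hC⟩ := isCompact_Icc.exists_bound_of_continuousOn hcont
    exact ⟨C, fun s hs => le_trans (le_abs_self _)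
      (by simpa [Real.norm_eq_abs] using hC s hs)⟩
  set M : ℝ := max C 0 + G + 1 with hM_def
  have hM1 : 1 ≤ M := by
    have := le_max_right C 0; simp only [hM_def]; linarith
  have hM0 : 0 ≤ M := by linarith
  set w : ℝ → ℝ := fun s => Real.exp (M * s) with hw_def
  have hwpos : ∀ s, 0 < w s := fun s => Real.exp_pos _
  -- key claim
  have key : ∀ δ : ℝ, 0 < δ → δ * Real.exp (M * t₁) ≤ 1 → φ t₁ ≤ R t₁ + δ * w t₁ := by
    intro δ hδ hδ1
    by_contra hneg
    push_neg at hneg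
    set g : ℝ → ℝ := fun s => R s + δ * w s - φ s with hg_def
    have hgt₁ : g t₁ < 0 := by simp only [hg_def]; linarith
    have hcg : ContinuousOn g (Set.Icc 0 t₁) := by
      refine ((hRc.mono hIccDc).add (continuousOn_const.mul ?_)).sub hcφ
      exact (Continuous.continuousOn (by fun_prop))
    set S : Set ℝ := Set.Icc 0 t₁ ∩ g ⁻¹' Set.Ici 0 with hS_def
    have hS_closed : IsClosed S :=
      hcg.preimage_isClosed_of_isClosed isClosed_Icc isClosed_Ici
    have h0S : (0 : ℝ) ∈ S := by
      constructor
      · exact ⟨le_refl 0, ht₁0⟩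
      · have hw0 : w 0 = 1 := by simp [hw_def]
        have hφ0 : φ 0 = ‖u 0 - ua 0‖ := rfl
        simp only [Set.mem_preimage, Set.mem_Ici, hg_def, hw0, hφ0]
        linarith
    have hSbdd : BddAbove S := ⟨t₁, fun s hs => hs.1.2⟩
    set t₀ : ℝ := sSup S with ht₀_def
    have ht₀S : t₀ ∈ S := hS_closed.csSup_mem ⟨0, h0S⟩ hSbdd
    have ht₀0 : 0 ≤ t₀ := ht₀S.1.1
    have ht₀t₁ : t₀ ≤ t₁ := ht₀S.1.2
    have hgt₀ : 0 ≤ g t₀ := ht₀S.2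
    have ht₀lt : t₀ < t₁ := by
      rcases lt_or_eq_of_le ht₀t₁ with hlt | hEq
      · exact hlt
      · rw [hEq] at hgt₀; linarith
    have hafter : ∀ s, t₀ < s → s ≤ t₁ → g s < 0 := by
      intro s hs hst₁
      by_contra hge
      push_neg at hge
      have hsS : s ∈ S := ⟨⟨le_trans ht₀0 hs.le, hst₁⟩, hge⟩
      exact absurd (le_csSup hSbdd hsS) (not_le.2 hs)
    have ht₀Dc : t₀ ∈ Dc := hIccDc ⟨ht₀0, ht₀t₁⟩
    have ht₀D : t₀ ∈ D := hDcD ht₀Dc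
    -- derivative of d at t₀
    obtain ⟨dP, hdP_def⟩ : ∃ x : H, x = B (d t₀) (u t₀) + B (ua t₀) (d t₀) - e t₀ :=
      ⟨_, rfl⟩
    have hder : HasDerivWithinAt d dP D t₀ := by
      have h1 := (hu t₀ ht₀D).sub (hua t₀ ht₀D)
      convert h1 using 1
      · rfl
      simp only [hdP_def, hd_def, map_sub, LinearMap.sub_apply]
      abel
    have hDmem : D ∈ nhdsWithin t₀ (Set.Ioi t₀) :=
      Filter.mem_of_superset (Ioo_mem_nhdsGT_of_mem ⟨le_refl t₀, ht₀lt⟩)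
        (fun s hs => hIccD ⟨le_trans ht₀0 hs.1.le, hs.2.le⟩)
    have hderIoi : HasDerivWithinAt d dP (Set.Ioi t₀) t₀ :=
      hder.mono_of_mem_nhdsWithin hDmem
    set c : ℝ := (G * 𝒟 t₀ + K * 𝒟p t₀) * R t₀ + G * R t₀ ^ 2 + ε t₀ with hc_def
    set c' : ℝ := (G * 𝒟 t₀ + K * 𝒟p t₀) * φ t₀ + G * φ t₀ ^ 2 + ε t₀ with hc'_def
    set θ : ℝ := δ * w t₀ / 4 with hθ_def
    have hwt₀ : 0 < w t₀ := hwpos t₀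
    have hθpos : 0 < θ := by simp only [hθ_def]; positivity
    have hφle : φ t₀ ≤ R t₀ + δ * w t₀ := by
      simp only [hg_def] at hgt₀; linarith
    have hδw1 : δ * w t₀ ≤ 1 := by
      have : w t₀ ≤ Real.exp (M * t₁) := by
        simp only [hw_def]
        exact Real.exp_le_exp.2 (mul_le_mul_of_nonneg_left ht₀t₁ hM0)
      nlinarith
    have hL0 : 0 ≤ G * 𝒟 t₀ + K * 𝒟p t₀ :=
      add_nonneg (mul_nonneg hG (h𝒟0 t₀ ht₀D)) (mul_nonneg hK (h𝒟p0 t₀ ht₀D))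
    have hRt₀0 : 0 ≤ R t₀ := hRnn t₀ ht₀Dc
    have hφ0 : 0 ≤ φ t₀ := norm_nonneg _
    have hδw0 : 0 ≤ δ * w t₀ := by positivity
    have hCt₀ : (G * 𝒟 t₀ + K * 𝒟p t₀) + 2 * G * R t₀ ≤ C := hC t₀ ⟨ht₀0, ht₀t₁⟩
    have hcc' : c' ≤ c + δ * w t₀ * (M - 1) := by
      have hA : (G * 𝒟 t₀ + K * 𝒟p t₀) * φ t₀
          ≤ (G * 𝒟 t₀ + K * 𝒟p t₀) * (R t₀ + δ * w t₀) :=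
        mul_le_mul_of_nonneg_left hφle hL0
      have hB' : G * φ t₀ ^ 2 ≤ G * (R t₀ + δ * w t₀) ^ 2 :=
        mul_le_mul_of_nonneg_left (pow_le_pow_left₀ hφ0 hφle 2) hG
      have hMm1 : (G * 𝒟 t₀ + K * 𝒟p t₀) + 2 * G * R t₀ + G ≤ M - 1 := by
        have := le_max_left C 0; simp only [hM_def]; linarith
      have hGs : G * (δ * w t₀) ≤ G * 1 := mul_le_mul_of_nonneg_left hδw1 hG
      have hstep1 : c' ≤ (G * 𝒟 t₀ + K * 𝒟p t₀) * (R t₀ + δ * w t₀)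
          + G * (R t₀ + δ * w t₀) ^ 2 + ε t₀ := by
        simp only [hc'_def]; linarith [hA, hB']
      have hstep2 : (G * 𝒟 t₀ + K * 𝒟p t₀) * (R t₀ + δ * w t₀)
          + G * (R t₀ + δ * w t₀) ^ 2 + ε t₀
          = c + (δ * w t₀) * ((G * 𝒟 t₀ + K * 𝒟p t₀) + 2 * G * R t₀
            + G * (δ * w t₀)) := by
        simp only [hc_def]; ring
      have hstep3 : (δ * w t₀) * ((G * 𝒟 t₀ + K * 𝒟p t₀) + 2 * G * R t₀
            + G * (δ * w t₀)) ≤ (δ * w t₀) * (M - 1) := by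
        refine mul_le_mul_of_nonneg_left ?_ hδw0
        linarith
      linarith [hstep1, hstep2.le, hstep3]
    -- slope facts
    have hmap : Filter.Tendsto (fun h : ℝ => t₀ + h)
        (nhdsWithin 0 (Set.Ioi 0)) (nhdsWithin t₀ (Set.Ioi t₀)) := by
      rw [tendsto_nhdsWithin_iff]
      constructor
      · have : Filter.Tendsto (fun h : ℝ => t₀ + h) (nhds 0) (nhds (t₀ + 0)) :=
          (continuous_const.add continuous_id).tendsto 0
        rw [add_zero] at this
        exact this.mono_left nhdsWithin_le_nhds
      · exact Filter.eventually_of_mem self_mem_nhdsWithin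
          (fun h hh => lt_add_of_pos_right t₀ hh)
    -- E1: slope bound for φ
    have hE1 : ∀ᶠ s in nhdsWithin t₀ (Set.Ioi t₀),
        φ s - φ t₀ ≤ (c' + θ) * (s - t₀) := by
      by_cases hz : d t₀ = 0
      · have hφt₀ : φ t₀ = 0 := by simp [hφ_def, hz]
        have hslope : Filter.Tendsto (slope d t₀) (nhdsWithin t₀ (Set.Ioi t₀))
            (nhds dP) := by
          have h1 := hasDerivWithinAt_iff_tendsto_slope.1 hderIoi
          rwa [Set.diff_singleton_eq_self (by simp)] at h1
        have hval : dP = -e t₀ := by simp [hdP_def, hz]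
        rw [hval] at hslope
        have hnorm : Filter.Tendsto (fun s => ‖slope d t₀ s‖)
            (nhdsWithin t₀ (Set.Ioi t₀)) (nhds ‖e t₀‖) := by
          simpa using hslope.norm
        have hlt : ‖e t₀‖ < c' + θ := by
          have h1 := he t₀ ht₀D
          have : c' = ε t₀ := by simp [hc'_def, hφt₀]
          linarith
        filter_upwards [hnorm.eventually_lt_const hlt, self_mem_nhdsWithin]
          with s h1 h2
        have hst : (0 : ℝ) < s - t₀ := sub_pos.2 h2
        have heq : ‖slope d t₀ s‖ = ‖d s‖ / (s - t₀) := by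
          rw [slope_def_module, norm_smul, hz, sub_zero, norm_inv,
            Real.norm_eq_abs, abs_of_pos hst, inv_mul_eq_div]
        rw [heq] at h1
        have : ‖d s‖ < (c' + θ) * (s - t₀) := by
          rw [div_lt_iff₀ hst] at h1; linarith
        simp only [hφ_def, hφt₀] at *
        linarith
      · have hφpos : 0 < φ t₀ := norm_pos_iff.2 hz
        have hy : HasDerivWithinAt (fun s => ‖d s‖ ^ 2)
            (2 * (inner ℝ (d t₀) dP : ℝ)) (Set.Ioi t₀) t₀ := hderIoi.norm_sq
        have hne : ‖d t₀‖ ^ 2 ≠ 0 := pow_ne_zero 2 (norm_ne_zero_iff.2 hz)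
        have h2 := hy.sqrt hne
        have hfun : (fun s => Real.sqrt (‖d s‖ ^ 2)) = φ :=
          funext fun s => Real.sqrt_sq (norm_nonneg _)
        have hvaleq : (2 * (inner ℝ (d t₀) dP : ℝ)) / (2 * Real.sqrt (‖d t₀‖ ^ 2))
            = (inner ℝ (d t₀) dP : ℝ) / φ t₀ := by
          rw [Real.sqrt_sq (norm_nonneg _)]
          rw [mul_div_mul_left _ _ (two_ne_zero)]
        rw [hfun, hvaleq] at h2
        -- inner product estimate
        have hu_eq : u t₀ = d t₀ + ua t₀ := by simp [hd_def]
        have hexp : (inner ℝ (d t₀) dP : ℝ)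
            = (inner ℝ (B (d t₀) (d t₀)) (d t₀) : ℝ)
              + (inner ℝ (d t₀) (B (d t₀) (ua t₀)) : ℝ)
              + (inner ℝ (B (ua t₀) (d t₀)) (d t₀) : ℝ)
              - (inner ℝ (d t₀) (e t₀) : ℝ) := by
          simp only [hdP_def, inner_add_right, inner_sub_right, hu_eq, map_add]
          rw [real_inner_comm (d t₀) (B (d t₀) (d t₀)),
            real_inner_comm (d t₀) (B (ua t₀) (d t₀))]
          try ring
        have h1 : (inner ℝ (B (d t₀) (d t₀)) (d t₀) : ℝ)
            ≤ G * ‖d t₀‖ * ‖d t₀‖ ^ 2 := (le_abs_self _).trans (hB2 _ _)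
        have h2i : (inner ℝ (d t₀) (B (d t₀) (ua t₀)) : ℝ)
            ≤ ‖d t₀‖ * (K * ‖d t₀‖ * 𝒟p t₀) := by
          refine (real_inner_le_norm _ _).trans ?_
          refine mul_le_mul_of_nonneg_left ?_ (norm_nonneg _)
          exact (hB1 (d t₀) (ua t₀)).trans
            (mul_le_mul_of_nonneg_left (h𝒟p t₀ ht₀D)
              (mul_nonneg hK (norm_nonneg _)))
        have h3 : (inner ℝ (B (ua t₀) (d t₀)) (d t₀) : ℝ)
            ≤ G * 𝒟 t₀ * ‖d t₀‖ ^ 2 := by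
          refine (le_abs_self _).trans ((hB2 _ _).trans ?_)
          exact mul_le_mul_of_nonneg_right
            (mul_le_mul_of_nonneg_left (h𝒟 t₀ ht₀D) hG) (sq_nonneg _)
        have h4 : -(inner ℝ (d t₀) (e t₀) : ℝ) ≤ ‖d t₀‖ * ε t₀ := by
          have habs := abs_real_inner_le_norm (d t₀) (e t₀)
          have hb : ‖d t₀‖ * ‖e t₀‖ ≤ ‖d t₀‖ * ε t₀ :=
            mul_le_mul_of_nonneg_left (he t₀ ht₀D) (norm_nonneg _)
          have hneg := neg_abs_le (inner ℝ (d t₀) (e t₀) : ℝ)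
          linarith [neg_le_neg (le_abs_self (inner ℝ (d t₀) (e t₀) : ℝ)),
            abs_nonneg (inner ℝ (d t₀) (e t₀) : ℝ), habs, hb,
            neg_abs_le (inner ℝ (d t₀) (e t₀) : ℝ)]
        have hinner : (inner ℝ (d t₀) dP : ℝ) ≤ c' * φ t₀ := by
          rw [hexp]
          have hφeq : φ t₀ = ‖d t₀‖ := rfl
          simp only [hc'_def, hφeq]
          nlinarith [h1, h2i, h3, h4]
        have hvle : (inner ℝ (d t₀) dP : ℝ) / φ t₀ ≤ c' :=
          (div_le_iff₀ hφpos).2 hinner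
        have htend := hasDerivWithinAt_iff_tendsto_slope.1 h2
        rw [Set.diff_singleton_eq_self (by simp)] at htend
        have hE := htend.eventually_lt_const
          (lt_of_le_of_lt hvle (lt_add_of_pos_right _ hθpos))
        filter_upwards [hE, self_mem_nhdsWithin] with s h1s h2s
        have hst : (0 : ℝ) < s - t₀ := sub_pos.2 h2s
        rw [slope_def_field, div_lt_iff₀ hst] at h1s
        linarith
    -- E2: slope bound for δ·w
    have hWder : HasDerivAt (fun s : ℝ => δ * w s) (δ * (w t₀ * M)) t₀ := by
      have h0 : HasDerivAt (fun s : ℝ => M * s) M t₀ := by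
        simpa using (hasDerivAt_id t₀).const_mul M
      have h1 : HasDerivAt (fun s : ℝ => Real.exp (M * s))
          (Real.exp (M * t₀) * M) t₀ := h0.exp
      exact h1.const_mul δ
    have hE2 : ∀ᶠ s in nhdsWithin t₀ (Set.Ioi t₀),
        (δ * M * w t₀ - θ) * (s - t₀) ≤ δ * w s - δ * w t₀ := by
      have htend : Filter.Tendsto (slope (fun s => δ * w s) t₀)
          (nhdsWithin t₀ (Set.Ioi t₀)) (nhds (δ * (w t₀ * M))) :=
        (hasDerivAt_iff_tendsto_slope.1 hWder).mono_left
          (nhdsWithin_mono _ (fun s hs => ne_of_gt hs))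
      have hlt : δ * M * w t₀ - θ < δ * (w t₀ * M) := by nlinarith
      filter_upwards [htend.eventually_const_lt hlt, self_mem_nhdsWithin]
        with s h1s h2s
      have hst : (0 : ℝ) < s - t₀ := sub_pos.2 h2s
      rw [slope_def_field, lt_div_iff₀ hst] at h1s
      linarith
    have hE3 : ∀ᶠ s in nhdsWithin t₀ (Set.Ioi t₀), s ∈ Set.Ioo t₀ t₁ :=
      Filter.eventually_of_mem (Ioo_mem_nhdsGT_of_mem ⟨le_refl t₀, ht₀lt⟩)
        (fun s hs => hs)
    -- frequent slope lower bound for R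
    have hfreq : ∃ᶠ h in nhdsWithin 0 (Set.Ioi 0),
        c - θ < (R (t₀ + h) - R t₀) / h := by
      have hlt : ((c - θ : ℝ) : EReal) < diniDerivPlus R t₀ :=
        lt_of_lt_of_le (EReal.coe_lt_coe_iff.2 (by linarith)) (hRd t₀ ht₀Dc)
      have := Filter.frequently_lt_of_lt_limsup (by isBoundedDefault) hlt
      exact this.mono (fun h hh => EReal.coe_lt_coe_iff.1 hh)
    -- combine
    obtain ⟨h, hRs, hφs, hws, hmem⟩ :=
      (hfreq.and_eventually ((hmap.eventually hE1).and
        ((hmap.eventually hE2).and (hmap.eventually hE3)))).exists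
    have hh0 : 0 < h := by have := hmem.1; linarith
    have hgs : g (t₀ + h) < 0 := hafter (t₀ + h) hmem.1 hmem.2.le
    have hRs' : (c - θ) * h < R (t₀ + h) - R t₀ := by
      rw [lt_div_iff₀ hh0] at hRs; linarith
    have hsub : t₀ + h - t₀ = h := by ring
    rw [hsub] at hφs hws
    simp only [hg_def] at hgs hgt₀
    have hmul : h * c' ≤ h * (c + δ * w t₀ * (M - 1)) :=
      mul_le_mul_of_nonneg_left hcc' hh0.le
    have hsh : 0 < δ * w t₀ * h := by positivity
    simp only [hθ_def] at hRs' hφs hws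
    clear_value g φ d w M c c' θ t₀ S
    linarith [hRs', hφs, hws, hgs, hgt₀, hmul, hsh]
  -- conclude
  have hfin : ∀ η : ℝ, 0 < η → φ t₁ ≤ R t₁ + η := by
    intro η hη
    set δ : ℝ := min (Real.exp (M * t₁))⁻¹ (η * (Real.exp (M * t₁))⁻¹) with hδ_def
    have hepos : (0 : ℝ) < Real.exp (M * t₁) := Real.exp_pos _
    have hδpos : 0 < δ := lt_min (by positivity) (by positivity)
    have h1 : δ * Real.exp (M * t₁) ≤ 1 := by
      have h2 : δ ≤ (Real.exp (M * t₁))⁻¹ := min_le_left _ _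
      calc δ * Real.exp (M * t₁) ≤ (Real.exp (M * t₁))⁻¹ * Real.exp (M * t₁) :=
            mul_le_mul_of_nonneg_right h2 hepos.le
        _ = 1 := inv_mul_cancel₀ hepos.ne'
    have h2 := key δ hδpos h1
    have h3 : δ * w t₁ ≤ η := by
      have h4 : δ ≤ η * (Real.exp (M * t₁))⁻¹ := min_le_right _ _
      have hwt : w t₁ = Real.exp (M * t₁) := rfl
      calc δ * w t₁ ≤ (η * (Real.exp (M * t₁))⁻¹) * w t₁ :=
            mul_le_mul_of_nonneg_right h4 (hwpos t₁).le
        _ = η := by rw [hwt]; field_simp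
    linarith
  have : φ t₁ ≤ R t₁ := by
    by_contra hlt
    push_neg at hlt
    have := hfin ((φ t₁ - R t₁) / 2) (by linarith)
    linarith
  simpa [hφ_def, hd_def] using this
end
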